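/- Let Y be a contre-lattice semistandard skyline filling on any basement, x its smallest entry value, and x_1 the cell containing the rightmost occurrence of x (first in column reading order). Then the filling Y' obtained by deleting the cell x_1 is again a contre-lattice semistandard skyline filling. -/

import Mathlib

open scoped Classical

/-! ## Words -/

def maxLetter (w : List ℕ) : ℕ := w.foldr max 0

def ContreUpTo (r : ℕ) (w : List ℕ) : Prop :=
  ∀ i j : ℕ, 1 < j → j ≤ r → (w.take i).count (j - 1) ≤ (w.take i).count j

def IsContreLattice (w : List ℕ) : Prop := ContreUpTo (maxLetter w) w

def IsRegularContreLattice (w : List ℕ) : Prop :=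
  IsContreLattice w ∧ (∀ x ∈ w, 1 ≤ x) ∧ 1 ∈ w

def IsLatticeWord (w : List ℕ) : Prop :=
  ∀ i j : ℕ, 1 ≤ j → (w.take i).count (j + 1) ≤ (w.take i).count j

/-! ## Skyline fillings -/

structure SkylineFilling (n : ℕ) where
  shape : Fin n → ℕ
  inner : Fin n → ℕ
  basement : Fin n → ℕ
  entry : Fin n → ℕ → ℕ

namespace SkylineFilling

variable {n : ℕ}

def Inversion (a b c : ℕ) : Prop := (b < a ∧ a ≤ c) ∨ (a ≤ c ∧ c < b)

def IsSSK (F : SkylineFilling n) : Prop :=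
  (∀ i, F.inner i ≤ F.shape i) ∧
  (∀ i : Fin n, ∀ k : ℕ, k ≤ F.inner i → F.entry i k = F.basement i) ∧
  (∀ i : Fin n, F.entry i 0 = F.basement i) ∧
  (∀ i : Fin n, ∀ k : ℕ, k + 1 ≤ F.shape i → F.entry i (k + 1) ≤ F.entry i k) ∧
  (∀ i j : Fin n, ∀ k : ℕ, i < j → F.shape j ≤ F.shape i → 1 ≤ k → k ≤ F.shape j →
      Inversion (F.entry i k) (F.entry j k) (F.entry i (k - 1))) ∧
  (∀ i j : Fin n, ∀ k : ℕ, i < j → F.shape i < F.shape j → k ≤ F.shape i → k + 1 ≤ F.shape j →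
      Inversion (F.entry j (k + 1)) (F.entry i k) (F.entry j k))

def EntriesIn (F : SkylineFilling n) (m : ℕ) : Prop :=
  ∀ i : Fin n, ∀ k : ℕ, F.inner i < k → k ≤ F.shape i →
    1 ≤ F.entry i k ∧ F.entry i k ≤ m

def Normalized (F : SkylineFilling n) : Prop :=
  ∀ i : Fin n, ∀ k : ℕ, F.shape i < k → F.entry i k = 0

def colList (F : SkylineFilling n) (k : ℕ) : List ℕ :=
  (List.finRange n).filterMap fun i =>
    if F.inner i < k ∧ k ≤ F.shape i then some (F.entry i k) else none

def width (F : SkylineFilling n) : ℕ := Finset.univ.sup F.shape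

def colWord (F : SkylineFilling n) : List ℕ :=
  ((List.range F.width).reverse.map fun k => F.colList (k + 1)).flatten

def looseWord (F : SkylineFilling n) : List ℕ :=
  ((List.range F.width).reverse.map fun k =>
    List.insertionSort (· ≥ ·) (F.colList (k + 1))).flatten

def colSet (F : SkylineFilling n) (k : ℕ) : Finset ℕ := (F.colList k).toFinset

def rowWord (F : SkylineFilling n) : List ℕ :=
  ((List.finRange n).reverse.map fun i =>
    (List.range (F.shape i - F.inner i)).map fun t => F.entry i (F.inner i + 1 + t)).flatten

def count (F : SkylineFilling n) (v : ℕ) : ℕ := F.rowWord.count v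

/-- The content of `F` is `lam*`, the reverse of the partition `lam` (which has `r` parts). -/
def ContentRev (F : SkylineFilling n) (lam : ℕ → ℕ) (r : ℕ) : Prop :=
  ∀ v : ℕ, F.count v = if 1 ≤ v ∧ v ≤ r then lam (r - v) else 0

end SkylineFilling

/-! ## Fillings of Ferrers shapes (CT and SSYT) -/

structure Filling (n : ℕ) where
  shape : Fin n → ℕ
  entry : Fin n → ℕ → ℕ

namespace Filling

variable {n : ℕ}

def IsCT (F : Filling n) (m : ℕ) : Prop :=
  (∀ i j : Fin n, i ≤ j → F.shape j ≤ F.shape i) ∧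
  (∀ i : Fin n, ∀ k : ℕ, 1 ≤ k → k + 1 ≤ F.shape i → F.entry i (k + 1) ≤ F.entry i k) ∧
  (∀ i j : Fin n, ∀ k : ℕ, i < j → 1 ≤ k → k ≤ F.shape j → F.entry j k < F.entry i k) ∧
  (∀ i : Fin n, ∀ k : ℕ, 1 ≤ k → k ≤ F.shape i → 1 ≤ F.entry i k ∧ F.entry i k ≤ m) ∧
  (∀ i : Fin n, ∀ k : ℕ, k = 0 ∨ F.shape i < k → F.entry i k = 0)

def IsSSYT (F : Filling n) (m : ℕ) : Prop :=
  (∀ i j : Fin n, i ≤ j → F.shape j ≤ F.shape i) ∧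
  (∀ i : Fin n, ∀ k : ℕ, 1 ≤ k → k + 1 ≤ F.shape i → F.entry i k ≤ F.entry i (k + 1)) ∧
  (∀ i j : Fin n, ∀ k : ℕ, i < j → 1 ≤ k → k ≤ F.shape j → F.entry i k < F.entry j k) ∧
  (∀ i : Fin n, ∀ k : ℕ, 1 ≤ k → k ≤ F.shape i → 1 ≤ F.entry i k ∧ F.entry i k ≤ m) ∧
  (∀ i : Fin n, ∀ k : ℕ, k = 0 ∨ F.shape i < k → F.entry i k = 0)

def word (F : Filling n) : List ℕ :=
  ((List.finRange n).map fun i =>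
    (List.range (F.shape i)).map fun t => F.entry i (t + 1)).flatten

def count (F : Filling n) (v : ℕ) : ℕ := F.word.count v

def colList (F : Filling n) (k : ℕ) : List ℕ :=
  (List.finRange n).filterMap fun i =>
    if 1 ≤ k ∧ k ≤ F.shape i then some (F.entry i k) else none

def ContentRev (F : Filling n) (lam : ℕ → ℕ) (r : ℕ) : Prop :=
  ∀ v : ℕ, F.count v = if 1 ≤ v ∧ v ≤ r then lam (r - v) else 0

end Filling

/-! ## Generating polynomials -/

noncomputable def schurPoly (n : ℕ) (lam : ℕ → ℕ) : MvPolynomial (Fin n) ℤ :=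
  ∑ μ ∈ Finset.Nat.antidiagonalTuple n (∑ i ∈ Finset.range n, lam i),
    (Nat.card {T : Filling n // T.shape = (fun i => lam i.val) ∧ T.IsSSYT n ∧
        ∀ v : Fin n, T.count (v.val + 1) = μ v}) •
      MvPolynomial.monomial (Finsupp.equivFunOnFinite.symm μ) (1 : ℤ)

noncomputable def atomPoly (n : ℕ) (γ : Fin n → ℕ) : MvPolynomial (Fin n) ℤ :=
  ∑ μ ∈ Finset.Nat.antidiagonalTuple n (∑ i, γ i),
    (Nat.card {F : SkylineFilling n // F.shape = γ ∧ F.inner = (fun _ => 0) ∧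
        F.basement = (fun i : Fin n => (i : ℕ) + 1) ∧ F.IsSSK ∧ F.EntriesIn n ∧ F.Normalized ∧
        ∀ v : Fin n, F.count (v.val + 1) = μ v}) •
      MvPolynomial.monomial (Finsupp.equivFunOnFinite.symm μ) (1 : ℤ)

noncomputable def qsPoly (n : ℕ) (α : List ℕ) : MvPolynomial (Fin n) ℤ :=
  ∑ γ ∈ (Finset.Nat.antidiagonalTuple n α.sum).filter
      (fun γ => (List.ofFn γ).filter (· != 0) = α),
    atomPoly n γ

noncomputable def charPoly (n : ℕ) (γ : Fin n → ℕ) : MvPolynomial (Fin n) ℤ :=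
  ∑ μ ∈ Finset.Nat.antidiagonalTuple n (∑ i, γ i),
    (Nat.card {F : SkylineFilling n // F.shape = (fun i => γ i.rev) ∧ F.inner = (fun _ => 0) ∧
        F.basement = (fun i : Fin n => n - (i : ℕ)) ∧ F.IsSSK ∧ F.EntriesIn n ∧ F.Normalized ∧
        ∀ v : Fin n, F.count (v.val + 1) = μ v}) •
      MvPolynomial.monomial (Finsupp.equivFunOnFinite.symm μ) (1 : ℤ)

noncomputable def lrsCount (n : ℕ) (γ δ : Fin n → ℕ) (lam : ℕ → ℕ) (r : ℕ) : ℕ :=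
  Nat.card {F : SkylineFilling n // F.shape = δ ∧ F.inner = γ ∧
    F.basement = (fun i : Fin n => 2 * n - (i : ℕ)) ∧ F.IsSSK ∧ F.EntriesIn n ∧ F.Normalized ∧
    IsRegularContreLattice F.colWord ∧ F.ContentRev lam r}

noncomputable def lrkCount (n : ℕ) (γ δ : Fin n → ℕ) (lam : ℕ → ℕ) (r : ℕ) : ℕ :=
  Nat.card {F : SkylineFilling n // F.shape = (fun i => δ i.rev) ∧
    F.inner = (fun i => γ i.rev) ∧
    F.basement = (fun i : Fin n => n + 1 + (i : ℕ)) ∧ F.IsSSK ∧ F.EntriesIn n ∧ F.Normalized ∧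
    IsRegularContreLattice F.colWord ∧ F.ContentRev lam r}

noncomputable def lrcCount (n : ℕ) (αl βl : List ℕ) (lam : ℕ → ℕ) (r : ℕ) : ℕ :=
  Nat.card (Quot (fun (L₁ L₂ : {F : SkylineFilling n //
      F.basement = (fun i : Fin n => 2 * n - (i : ℕ)) ∧ F.IsSSK ∧ F.EntriesIn n ∧ F.Normalized ∧
      IsRegularContreLattice F.colWord ∧ F.ContentRev lam r ∧
      (List.ofFn F.shape).filter (· != 0) = βl ∧
      (List.ofFn F.inner).filter (· != 0) = αl}) =>
    ∀ k : ℕ, L₁.1.colSet k = L₂.1.colSet k))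

def IsRemComp (a b : List ℕ) (k : ℕ) : Prop :=
  ∃ u v : List ℕ, b = u ++ k :: v ∧ k ∉ v ∧
    a = u ++ (if k = 1 then v else (k - 1) :: v)



/-! ## Auxiliary lemmas -/

lemma maxLetter_del (u v : List ℕ) (x : ℕ) : maxLetter (u ++ v) ≤ maxLetter (u ++ x :: v) := by
  induction u with
  | nil =>
      simp only [List.nil_append, maxLetter, List.foldr_cons]
      exact le_max_right _ _
  | cons a u ih =>
      simp only [List.cons_append, maxLetter, List.foldr_cons] at *
      exact max_le_max le_rfl ih

lemma contreUpTo_mono {r r' : ℕ} (h : r' ≤ r) {w : List ℕ} (hw : ContreUpTo r w) :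
    ContreUpTo r' w := fun i j hj hjr => hw i j hj (hjr.trans h)

lemma contre_del (r x : ℕ) (u v : List ℕ) (h : ContreUpTo r (u ++ x :: v))
    (hx : ∀ y ∈ u ++ x :: v, x ≤ y) : ContreUpTo r (u ++ v) := by
  intro t j hj1 hjr
  by_cases ht : t ≤ u.length
  · have h1 : (u ++ v).take t = (u ++ x :: v).take t := by
      rw [List.take_append, List.take_append,
        Nat.sub_eq_zero_of_le ht, List.take_zero, List.take_zero]
    rw [h1]; exact h t j hj1 hjr
  · push_neg at ht
    have h1 : (u ++ v).take t = u ++ v.take (t - u.length) := by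
      rw [List.take_append, List.take_of_length_le (le_of_lt ht)]
    have h2 : (u ++ x :: v).take (t + 1) = u ++ x :: v.take (t - u.length) := by
      rw [List.take_append, List.take_of_length_le (by omega)]
      congr 1
      have : t + 1 - u.length = (t - u.length) + 1 := by omega
      rw [this, List.take_succ_cons]
    have hcount : ∀ y : ℕ, ((u ++ v).take t).count y + (if x = y then 1 else 0)
        = ((u ++ x :: v).take (t + 1)).count y := by
      intro y
      rw [h1, h2]
      simp [List.count_append, List.count_cons]
      omega
    have hkey := h (t + 1) j hj1 hjr
    by_cases hjx : j = x
    · -- count of j - 1 is zero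
      have hmem : j - 1 ∉ (u ++ v).take t := by
        intro hm
        have hm2 : j - 1 ∈ u ++ x :: v := by
          have := List.take_subset t (u ++ v) hm
          subst hjx
          rcases List.mem_append.1 this with h' | h'
          · exact List.mem_append.2 (Or.inl h')
          · exact List.mem_append.2 (Or.inr (List.mem_cons_of_mem _ h'))
        have := hx _ hm2
        omega
      rw [List.count_eq_zero_of_not_mem hmem]
      exact Nat.zero_le _
    · have e1 := hcount (j - 1)
      have e2 := hcount j
      by_cases hjx1 : j - 1 = x
      · have hxj : x ≠ j := by omega
        rw [if_neg hxj] at e2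
        rw [hjx1] at e1 hkey ⊢
        rw [if_pos rfl] at e1
        omega
      · have hxj : x ≠ j := fun hh => hjx hh.symm
        have hxj1 : x ≠ j - 1 := fun hh => hjx1 hh.symm
        rw [if_neg hxj] at e2
        rw [if_neg hxj1] at e1
        omega

lemma flatten_split (g g' : ℕ → List ℕ) (k : ℕ) (hgg : ∀ m, m ≠ k → g m = g' m) :
    ∀ W, k < W → ∃ P S : List ℕ,
      ((List.range W).reverse.map g).flatten = P ++ (g k ++ S) ∧
      ((List.range W).reverse.map g').flatten = P ++ (g' k ++ S) := by
  intro W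
  induction W with
  | zero => omega
  | succ W ih =>
      intro hkW
      rw [List.range_succ, List.reverse_append, List.reverse_singleton]
      by_cases hk : k = W
      · subst hk
        refine ⟨[], ((List.range k).reverse.map g).flatten, by simp, ?_⟩
        have : (List.range k).reverse.map g = (List.range k).reverse.map g' := by
          apply List.map_congr_left
          intro m hm
          have : m < k := by
            have := List.mem_range.1 (List.mem_reverse.1 hm); omega
          exact hgg m (by omega)
        simp [← this]
      · obtain ⟨P, S, h1, h2⟩ := ih (by omega)
        refine ⟨g W ++ P, S, ?_, ?_⟩
        · simp only [List.map_append, List.flatten_append, List.map_cons, List.map_nil,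
            List.flatten_cons, List.flatten_nil, List.append_nil, h1, List.append_assoc]
        · simp only [List.map_append, List.flatten_append, List.map_cons, List.map_nil,
            List.flatten_cons, List.flatten_nil, List.append_nil, h2,
            ← hgg W (Ne.symm hk), List.append_assoc]

lemma flatten_ext (g : ℕ → List ℕ) (W : ℕ) (hg : ∀ m, W ≤ m → g m = []) :
    ∀ d, ((List.range (W + d)).reverse.map g).flatten = ((List.range W).reverse.map g).flatten := by
  intro d
  induction d with
  | zero => rfl
  | succ d ih =>
      rw [← Nat.add_assoc, List.range_succ, List.reverse_append, List.reverse_singleton]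
      simp only [List.map_append, List.flatten_append, List.map_cons, List.map_nil,
        List.flatten_cons, List.flatten_nil]
      rw [hg (W + d) (by omega)]
      simpa using ih


lemma colList_gt_width {n : ℕ} (G : SkylineFilling n) (m : ℕ) (hm : G.width ≤ m) :
    G.colList (m + 1) = [] := by
  rw [SkylineFilling.colList]
  rw [List.filterMap_eq_nil_iff]
  intro j _
  rw [if_neg]
  rintro ⟨-, hle⟩
  have := Finset.le_sup (f := G.shape) (Finset.mem_univ j)
  have : G.shape j ≤ G.width := this
  omega

lemma colWord_take {n : ℕ} (G : SkylineFilling n) (W : ℕ) (hW : G.width ≤ W) :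
    ((List.range W).reverse.map fun m => G.colList (m + 1)).flatten = G.colWord := by
  obtain ⟨d, rfl⟩ := Nat.exists_eq_add_of_le hW
  rw [SkylineFilling.colWord]
  exact flatten_ext _ _ (fun m hm => colList_gt_width G m hm) d

theorem stmt6 (n : ℕ) (F : SkylineFilling n) (hssk : F.IsSSK)
    (hcl : IsContreLattice F.colWord)
    (x : ℕ) (i : Fin n) (k : ℕ)
    (hcell : F.inner i < k ∧ k ≤ F.shape i) (hval : F.entry i k = x)
    (hmin : ∀ (i' : Fin n) (k' : ℕ), F.inner i' < k' → k' ≤ F.shape i' → x ≤ F.entry i' k')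
    (hfirst : ∀ (i' : Fin n) (k' : ℕ), F.inner i' < k' → k' ≤ F.shape i' →
      F.entry i' k' = x → (i', k') ≠ (i, k) → k' < k ∨ (k' = k ∧ i < i')) :
    SkylineFilling.IsSSK
      { shape := Function.update F.shape i (F.shape i - 1), inner := F.inner,
        basement := F.basement, entry := F.entry } ∧
    IsContreLattice
      (SkylineFilling.colWord
        { shape := Function.update F.shape i (F.shape i - 1), inner := F.inner,
          basement := F.basement, entry := F.entry })  := by
  obtain ⟨h1, h2, h3, h4, h5, h6⟩ := hssk
  obtain ⟨hik, hks⟩ := hcell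
  have hk1 : 1 ≤ k := by omega
  have hkeq : k = F.shape i := by
    by_contra hlt
    have hklt : k < F.shape i := by omega
    have hle : F.entry i (k + 1) ≤ F.entry i k := h4 i k (by omega)
    have hge : x ≤ F.entry i (k + 1) := hmin i (k + 1) (by omega) (by omega)
    have hxe : F.entry i (k + 1) = x := by omega
    rcases hfirst i (k + 1) (by omega) (by omega) hxe (by simp) with h | ⟨h, -⟩ <;> omega
  -- Key lemma: former type A pairs (i, b) become type B pairs
  have keyAB : ∀ b : Fin n, i < b → F.shape b = k → ∀ m, m + 1 ≤ k →
      SkylineFilling.Inversion (F.entry b (m + 1)) (F.entry i m) (F.entry b m) := by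
    intro b hib hsb m hm
    have typeA : ∀ t, t + 1 ≤ k →
        (F.entry b (t + 1) < F.entry i (t + 1) ∧ F.entry i (t + 1) ≤ F.entry i t) ∨
        (F.entry i (t + 1) ≤ F.entry i t ∧ F.entry i t < F.entry b (t + 1)) := by
      intro t ht
      have := h5 i b (t + 1) hib (by omega) (by omega) (by omega)
      simpa [SkylineFilling.Inversion, Nat.add_sub_cancel] using this
    have hbb : F.entry b (m + 1) ≤ F.entry b m := h4 b m (by omega)
    have hor : F.entry i m < F.entry b (m + 1) ∨ F.entry b m < F.entry i m := by
      by_contra hcon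
      push_neg at hcon
      obtain ⟨hn1, hn2⟩ := hcon
      by_cases hib2 : F.inner b < k
      · have claim : ∀ t, m + 1 ≤ t → t ≤ k → F.entry b t < F.entry i t := by
          intro t ht
          induction t, ht using Nat.le_induction with
          | base =>
              intro htk
              rcases typeA m (by omega) with ⟨h', -⟩ | ⟨-, h'⟩
              · exact h'
              · omega
          | succ t ht ih =>
              intro htk
              have ihh := ih (by omega)
              rcases typeA t (by omega) with ⟨h', -⟩ | ⟨-, h'⟩
              · exact h'
              · have := h4 b t (by omega)
                omega
        have hck := claim k (by omega) le_rfl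
        have hmb := hmin b k hib2 (by omega)
        omega
      · have e1 : F.entry b (m + 1) = F.basement b := h2 b (m + 1) (by omega)
        have e2 : F.entry b m = F.basement b := h2 b m (by omega)
        rcases typeA m (by omega) with ⟨h', h''⟩ | ⟨-, h'⟩ <;> omega
    rcases hor with h' | h'
    · exact Or.inl ⟨h', hbb⟩
    · exact Or.inr ⟨hbb, h'⟩
  -- Key lemma: former type B pairs (a, i) become type A pairs
  have keyBA : ∀ a : Fin n, a < i → F.shape a = k - 1 → ∀ m, m + 1 ≤ k - 1 →
      SkylineFilling.Inversion (F.entry a (m + 1)) (F.entry i (m + 1)) (F.entry a m) := by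
    intro a hai hsa m hm
    have typeB : ∀ t, t ≤ k - 1 →
        (F.entry a t < F.entry i (t + 1) ∧ F.entry i (t + 1) ≤ F.entry i t) ∨
        (F.entry i (t + 1) ≤ F.entry i t ∧ F.entry i t < F.entry a t) := by
      intro t ht
      exact h6 a i t hai (by omega) (by omega) (by omega)
    have haa : F.entry a (m + 1) ≤ F.entry a m := h4 a m (by omega)
    have hor : F.entry i (m + 1) < F.entry a (m + 1) ∨ F.entry a m < F.entry i (m + 1) := by
      by_contra hcon
      push_neg at hcon
      obtain ⟨hn1, hn2⟩ := hcon
      by_cases hia2 : F.inner a < k - 1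
      · have claim : ∀ t, m + 1 ≤ t → t ≤ k - 1 → F.entry a t < F.entry i (t + 1) := by
          intro t ht
          induction t, ht using Nat.le_induction with
          | base =>
              intro htk
              rcases typeB (m + 1) (by omega) with ⟨h', -⟩ | ⟨-, h'⟩
              · exact h'
              · omega
          | succ t ht ih =>
              intro htk
              have ihh := ih (by omega)
              rcases typeB (t + 1) (by omega) with ⟨h', -⟩ | ⟨-, h'⟩
              · exact h'
              · have := h4 a t (by omega)
                omega
        have hck := claim (k - 1) (by omega) le_rfl
        have hkk : k - 1 + 1 = k := by omega
        rw [hkk] at hck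
        have hma := hmin a (k - 1) hia2 (by omega)
        omega
      · have e1 : F.entry a (m + 1) = F.basement a := h2 a (m + 1) (by omega)
        have e2 : F.entry a m = F.basement a := h2 a m (by omega)
        rcases typeB (m + 1) (by omega) with ⟨h', h''⟩ | ⟨-, h'⟩ <;> omega
    rcases hor with h' | h'
    · exact Or.inl ⟨h', haa⟩
    · exact Or.inr ⟨haa, h'⟩
  constructor
  · -- SSK part
    unfold SkylineFilling.IsSSK
    dsimp only
    refine ⟨?_, h2, h3, ?_, ?_, ?_⟩
    · intro j
      by_cases hj : j = i
      · subst hj; rw [Function.update_self]; omega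
      · rw [Function.update_of_ne hj]; exact h1 j
    · intro j t ht
      apply h4
      by_cases hj : j = i
      · subst hj; rw [Function.update_self] at ht; omega
      · rwa [Function.update_of_ne hj] at ht
    · -- type A
      intro a b t hab hba ht1 ht2
      by_cases hbi : b = i
      · rw [hbi] at hba ht2 ⊢
        have hai : a ≠ i := by rw [← hbi]; exact Fin.ne_of_lt hab
        rw [Function.update_self] at hba ht2
        rw [Function.update_of_ne hai] at hba
        rw [hbi] at hab
        by_cases hcase : F.shape i ≤ F.shape a
        · exact h5 a i t hab hcase ht1 (by omega)
        · have hsa : F.shape a = k - 1 := by omega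
          have h' := keyBA a hab hsa (t - 1) (by omega)
          have ht' : t - 1 + 1 = t := by omega
          rw [ht'] at h'
          exact h'
      · rw [Function.update_of_ne hbi] at hba ht2
        by_cases hai : a = i
        · rw [hai] at hba hab ⊢
          rw [Function.update_self] at hba
          exact h5 i b t hab (by omega) ht1 ht2
        · rw [Function.update_of_ne hai] at hba
          exact h5 a b t hab hba ht1 ht2
    · -- type B
      intro a b t hab hba ht1 ht2
      by_cases hai : a = i
      · rw [hai] at hba ht1 hab ⊢
        have hbi : b ≠ i := ne_of_gt hab
        rw [Function.update_self] at hba ht1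
        rw [Function.update_of_ne hbi] at hba ht2
        by_cases hcase : F.shape i < F.shape b
        · exact h6 i b t hab hcase (by omega) ht2
        · have hsb : F.shape b = k := by omega
          exact keyAB b hab hsb t (by omega)
      · rw [Function.update_of_ne hai] at hba ht1
        by_cases hbi : b = i
        · rw [hbi] at hba ht2 hab ⊢
          rw [Function.update_self] at hba ht2
          exact h6 a i t hab (by omega) ht1 (by omega)
        · rw [Function.update_of_ne hbi] at hba ht2
          exact h6 a b t hab hba ht1 ht2
  · -- contre-lattice part
    set F' : SkylineFilling n :=
      { shape := Function.update F.shape i (F.shape i - 1), inner := F.inner,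
        basement := F.basement, entry := F.entry } with hF'
    have hsle : ∀ j, F'.shape j ≤ F.shape j := by
      intro j
      simp only [hF']
      by_cases hj : j = i
      · rw [hj, Function.update_self]; omega
      · rw [Function.update_of_ne hj]
    have hwidth : k ≤ F.width := by
      have h' : F.shape i ≤ F.width := Finset.le_sup (Finset.mem_univ i)
      omega
    have hw' : F'.width ≤ F.width :=
      Finset.sup_mono_fun (fun j _ => hsle j)
    -- the column lists agree away from column k
    have hgg : ∀ m, m ≠ k - 1 → F.colList (m + 1) = F'.colList (m + 1) := by
      intro m hm
      rw [SkylineFilling.colList, SkylineFilling.colList]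
      apply List.filterMap_congr
      intro j _
      by_cases hj : j = i
      · rw [hj]
        simp only [hF', Function.update_self]
        refine if_congr ?_ rfl rfl
        constructor
        · rintro ⟨hh1, hh2⟩; exact ⟨hh1, by omega⟩
        · rintro ⟨hh1, hh2⟩; exact ⟨hh1, by omega⟩
      · simp only [hF', Function.update_of_ne hj]
    obtain ⟨P, S, hw1, hw2⟩ :=
      flatten_split (fun m => F.colList (m + 1)) (fun m => F'.colList (m + 1)) (k - 1)
        (fun m hm => hgg m hm) F.width (by omega)
    have hkk : k - 1 + 1 = k := by omega
    rw [hkk] at hw1 hw2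
    -- split the row list at i
    obtain ⟨s, t, hst⟩ := List.append_of_mem (List.mem_finRange i)
    have hnd := List.nodup_finRange n
    rw [hst] at hnd
    have his : i ∉ s := by
      have := (List.nodup_append.1 hnd).2.2
      intro hmem
      exact this i hmem i List.mem_cons_self rfl
    have hit : i ∉ t := by
      have := (List.nodup_append.1 hnd).2.1
      exact (List.nodup_cons.1 this).1
    set f : Fin n → Option ℕ :=
      fun j => if F.inner j < k ∧ k ≤ F.shape j then some (F.entry j k) else none with hf
    have hfi : f i = some x := by
      have hc : F.inner i < k ∧ k ≤ F.shape i := ⟨hik, hks⟩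
      simp only [hf]
      rw [if_pos hc, hval]
    have hsplitF : F.colList k = s.filterMap f ++ x :: t.filterMap f := by
      rw [SkylineFilling.colList, hst, List.filterMap_append, List.filterMap_cons_some hfi]
    have hsplitF' : F'.colList k = s.filterMap f ++ t.filterMap f := by
      set f' : Fin n → Option ℕ :=
        fun j => if F'.inner j < k ∧ k ≤ F'.shape j then some (F'.entry j k) else none with hf'
      have hfi' : f' i = none := by
        simp only [hf', hF', Function.update_self]
        rw [if_neg]
        rintro ⟨-, hh⟩
        omega
      have hcong : ∀ j : Fin n, j ≠ i → f' j = f j := by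
        intro j hj
        simp only [hf', hf, hF', Function.update_of_ne hj]
      rw [SkylineFilling.colList, hst, List.filterMap_append, List.filterMap_cons_none hfi']
      rw [List.filterMap_congr (fun a ha => hcong a (fun hh => his (hh ▸ ha))),
        List.filterMap_congr (fun a ha => hcong a (fun hh => hit (hh ▸ ha)))]
    have hwF : F.colWord = (P ++ s.filterMap f) ++ x :: (t.filterMap f ++ S) := by
      rw [SkylineFilling.colWord, hw1, hsplitF]
      simp [List.append_assoc]
    have hwF' : F'.colWord = (P ++ s.filterMap f) ++ (t.filterMap f ++ S) := by
      rw [← colWord_take F' F.width hw', hw2, hsplitF']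
      simp [List.append_assoc]
    have hge : ∀ y ∈ F.colWord, x ≤ y := by
      intro y hy
      rw [SkylineFilling.colWord] at hy
      obtain ⟨l, hl, hyl⟩ := List.mem_flatten.1 hy
      obtain ⟨m, hm, rfl⟩ := List.mem_map.1 hl
      rw [SkylineFilling.colList] at hyl
      obtain ⟨j, -, hjy⟩ := List.mem_filterMap.1 hyl
      by_cases hc : F.inner j < m + 1 ∧ m + 1 ≤ F.shape j
      · rw [if_pos hc] at hjy
        exact (Option.some_inj.1 hjy) ▸ hmin j (m + 1) hc.1 hc.2
      · rw [if_neg hc] at hjy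
        cases hjy
    rw [IsContreLattice, hwF']
    have hcl' : ContreUpTo (maxLetter F.colWord)
        ((P ++ s.filterMap f) ++ (t.filterMap f ++ S)) := by
      apply contre_del _ x
      · rw [← hwF]; exact hcl
      · rw [← hwF]; exact hge
    apply contreUpTo_mono _ hcl'
    rw [hwF]
    exact maxLetter_del _ _ x
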